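/- If e → p ⇉ q is an equalizer diagram of polynomial functors (computed pointwise), then for any polynomial functor r, both (e ∘ r) → (p ∘ r) ⇉ (q ∘ r) and (r ∘ e) → (r ∘ p) ⇉ (r ∘ q) are equalizer diagrams. -/
import Mathlib


universe u

/-- if `e → p ⇉ q` is a (pointwise) equalizer diagram of polynomial
functors, then composing with any polynomial functor `r` on either side again
yields a (pointwise) equalizer diagram: `e◁r → p◁r ⇉ q◁r` and `r◁e → r◁p ⇉ r◁q`.
A pointwise equalizer in `Set` is an injection whose image is the set where the
two parallel maps agree. -/
theorem comp_preserves_equalizers (e p q r : PFunctor.{u})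
    (ι : ∀ X : Type u, e.Obj X → p.Obj X)
    (f g : ∀ X : Type u, p.Obj X → q.Obj X)
    (hι : ∀ (X Y : Type u) (k : X → Y) (x : e.Obj X),
      ι Y (e.map k x) = p.map k (ι X x))
    (hf : ∀ (X Y : Type u) (k : X → Y) (x : p.Obj X),
      f Y (p.map k x) = q.map k (f X x))
    (hg : ∀ (X Y : Type u) (k : X → Y) (x : p.Obj X),
      g Y (p.map k x) = q.map k (g X x))
    (heq : ∀ X : Type u, Function.Injective (ι X) ∧
      ∀ y : p.Obj X, f X y = g X y ↔ ∃ x, ι X x = y) :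
    (∀ X : Type u, Function.Injective (ι (r.Obj X)) ∧
       ∀ y : p.Obj (r.Obj X),
         f (r.Obj X) y = g (r.Obj X) y ↔ ∃ x, ι (r.Obj X) x = y) ∧
    (∀ X : Type u, Function.Injective (r.map (ι X)) ∧
       ∀ y : r.Obj (p.Obj X),
         r.map (f X) y = r.map (g X) y ↔ ∃ x, r.map (ι X) x = y) := by
  constructor
  · exact fun X => heq (r.Obj X)
  · intro X
    obtain ⟨hinj, himg⟩ := heq X
    constructor
    · rintro ⟨a₁, h₁⟩ ⟨a₂, h₂⟩ hmap
      have ha : a₁ = a₂ := congrArg Sigma.fst hmap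
      subst ha
      simp only [PFunctor.map] at hmap
      injection hmap with h1 h2
      have hcomp : ι X ∘ h₁ = ι X ∘ h₂ := h2
      have : h₁ = h₂ := funext fun b => hinj (congrFun hcomp b)
      rw [this]
    · rintro ⟨a, h⟩
      constructor
      · intro hy
        simp only [PFunctor.map] at hy
        injection hy with h1 h2
        have hcomp : f X ∘ h = g X ∘ h := h2
        have : ∀ b : r.B a, ∃ x, ι X x = h b := fun b =>
          (himg (h b)).mp (congrFun hcomp b)
        choose w hw using this
        refine ⟨⟨a, w⟩, ?_⟩
        show (⟨a, ι X ∘ w⟩ : r.Obj (p.Obj X)) = ⟨a, h⟩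
        exact congrArg _ (funext hw)
      · rintro ⟨⟨a', w⟩, hx⟩
        have ha : a' = a := congrArg Sigma.fst hx
        subst ha
        simp only [PFunctor.map] at hx
        injection hx with h1 h2
        have hcomp : ι X ∘ w = h := h2
        show (⟨a', f X ∘ h⟩ : r.Obj (q.Obj X)) = ⟨a', g X ∘ h⟩
        refine congrArg _ (funext fun b => ?_)
        show f X (h b) = g X (h b)
        have hb : ι X (w b) = h b := congrFun hcomp b
        exact hb ▸ (himg (ι X (w b))).mpr ⟨w b, rfl⟩
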